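/- Let a > 0, t > 0, and let μ be the signed Borel measure on ℝ given by dμ(x) = [Θ_t(x+a) − Θ_t(x−a)]dx − dδ_{−a}(x) + dδ_a(x). Then the total variation V(μ) satisfies V(μ) ≥ (1/√π)∫_0^{a/√t} e^{−y²} dy, and hence liminf_{t→0⁺} V(μ) ≥ 1/2; in particular Θ_t(·+a) − Θ_t(·−a) does not converge to δ_{−a} − δ_a in variation as t → 0⁺. -/

import Mathlib

open MeasureTheory Real ENNReal Filter Classical

/-- The Gauss–Weierstrass heat kernel on ℝ. -/
noncomputable def heatKernel (t x : ℝ) : ℝ :=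
  Real.exp (-x ^ 2 / (4 * t)) / (2 * Real.sqrt (Real.pi * t))

lemma heatKernel_eq (t : ℝ) (ht : 0 < t) (x : ℝ) :
    heatKernel t x = Real.exp (-(1 / (4 * t)) * x ^ 2) * (2 * Real.sqrt (Real.pi * t))⁻¹ := by
  have h : -x ^ 2 / (4 * t) = -(1 / (4 * t)) * x ^ 2 := by
    field_simp
  rw [heatKernel, h, div_eq_mul_inv]

lemma heatKernel_nonneg (t x : ℝ) : 0 ≤ heatKernel t x := by
  unfold heatKernel
  positivity

lemma heatKernel_integrable {t : ℝ} (ht : 0 < t) :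
    MeasureTheory.Integrable (fun x : ℝ => heatKernel t x) := by
  have hb : (0:ℝ) < 1 / (4 * t) := by positivity
  have h := (integrable_exp_neg_mul_sq hb).mul_const (2 * Real.sqrt (Real.pi * t))⁻¹
  exact h.congr (Filter.EventuallyEq.of_eq (funext fun x => (heatKernel_eq t ht x).symm))

lemma heatKernel_integral {t : ℝ} (ht : 0 < t) :
    (∫ x : ℝ, heatKernel t x) = 1 := by
  have hb : (0:ℝ) < 1 / (4 * t) := by positivity
  have hs : (0:ℝ) < Real.sqrt (Real.pi * t) :=
    Real.sqrt_pos.mpr (by positivity)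
  calc (∫ x : ℝ, heatKernel t x)
      = ∫ x : ℝ, Real.exp (-(1 / (4 * t)) * x ^ 2) * (2 * Real.sqrt (Real.pi * t))⁻¹ := by
        congr 1; funext x; exact heatKernel_eq t ht x
    _ = (∫ x : ℝ, Real.exp (-(1 / (4 * t)) * x ^ 2)) * (2 * Real.sqrt (Real.pi * t))⁻¹ :=
        integral_mul_const _ _
    _ = Real.sqrt (Real.pi / (1 / (4 * t))) * (2 * Real.sqrt (Real.pi * t))⁻¹ := by
        rw [integral_gaussian]
    _ = 1 := by
        have h1 : Real.pi / (1 / (4 * t)) = 4 * (Real.pi * t) := by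
          field_simp
        have h4 : Real.sqrt 4 = 2 := by
          rw [show (4:ℝ) = 2 ^ 2 by norm_num, Real.sqrt_sq (by norm_num : (0:ℝ) ≤ 2)]
        rw [h1, Real.sqrt_mul (by norm_num : (0:ℝ) ≤ 4), h4]
        exact mul_inv_cancel₀ (by positivity)

/-- For `t > 0` and any measurable `E`, the value `μ t E` is bounded by `4` in absolute value. -/
lemma apply_bound (a : ℝ) (t : ℝ) (ht : 0 < t) (E : Set ℝ) (hE : MeasurableSet E) :
    |(∫ x in E, (heatKernel t (x + a) - heatKernel t (x - a)))
        - (if -a ∈ E then (1:ℝ) else 0) + (if a ∈ E then (1:ℝ) else 0)| ≤ 4 := by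
  have hint₁ : MeasureTheory.Integrable (fun x : ℝ => heatKernel t (x + a)) :=
    (heatKernel_integrable ht).comp_add_right a
  have hint₂ : MeasureTheory.Integrable (fun x : ℝ => heatKernel t (x - a)) :=
    (heatKernel_integrable ht).comp_sub_right a
  have hf_int : MeasureTheory.Integrable
      (fun x : ℝ => heatKernel t (x + a) - heatKernel t (x - a)) := hint₁.sub hint₂
  have hg_int : MeasureTheory.Integrable
      (fun x : ℝ => heatKernel t (x + a) + heatKernel t (x - a)) := hint₁.add hint₂
  have hgval : (∫ x : ℝ, (heatKernel t (x + a) + heatKernel t (x - a))) = 2 := by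
    rw [integral_add hint₁ hint₂]
    rw [integral_add_right_eq_self (fun x : ℝ => heatKernel t x) a,
      integral_sub_right_eq_self (fun x : ℝ => heatKernel t x) a,
      heatKernel_integral ht]
    norm_num
  have hIbound : |∫ x in E, (heatKernel t (x + a) - heatKernel t (x - a))| ≤ 2 := by
    have h1 : |∫ x in E, (heatKernel t (x + a) - heatKernel t (x - a))|
        ≤ ∫ x in E, |heatKernel t (x + a) - heatKernel t (x - a)| :=
      by simpa [Real.norm_eq_abs] using
        MeasureTheory.norm_integral_le_integral_norm
          (μ := (volume : Measure ℝ).restrict E)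
          (fun x => heatKernel t (x + a) - heatKernel t (x - a))
    have h2 : (∫ x in E, |heatKernel t (x + a) - heatKernel t (x - a)|)
        ≤ ∫ x in E, (heatKernel t (x + a) + heatKernel t (x - a)) := by
      apply MeasureTheory.integral_mono hf_int.abs.integrableOn hg_int.integrableOn
      intro x
      have h₁ := heatKernel_nonneg t (x + a)
      have h₂ := heatKernel_nonneg t (x - a)
      dsimp only
      rw [abs_le]
      constructor <;> linarith
    have h3 : (∫ x in E, (heatKernel t (x + a) + heatKernel t (x - a)))
        ≤ ∫ x : ℝ, (heatKernel t (x + a) + heatKernel t (x - a)) :=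
      MeasureTheory.setIntegral_le_integral hg_int
        (Filter.Eventually.of_forall fun x =>
          add_nonneg (heatKernel_nonneg t _) (heatKernel_nonneg t _))
    rw [hgval] at h3
    linarith
  have hb1 : |(if -a ∈ E then (1:ℝ) else 0)| ≤ 1 := by split <;> norm_num
  have hb2 : |(if a ∈ E then (1:ℝ) else 0)| ≤ 1 := by split <;> norm_num
  calc |(∫ x in E, (heatKernel t (x + a) - heatKernel t (x - a)))
        - (if -a ∈ E then (1:ℝ) else 0) + (if a ∈ E then (1:ℝ) else 0)|
      ≤ |(∫ x in E, (heatKernel t (x + a) - heatKernel t (x - a)))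
          - (if -a ∈ E then (1:ℝ) else 0)| + |(if a ∈ E then (1:ℝ) else 0)| := abs_add_le _ _
    _ ≤ (|∫ x in E, (heatKernel t (x + a) - heatKernel t (x - a))|
          + |(if -a ∈ E then (1:ℝ) else 0)|) + |(if a ∈ E then (1:ℝ) else 0)| := by
          have := abs_sub (∫ x in E, (heatKernel t (x + a) - heatKernel t (x - a)))
            (if -a ∈ E then (1:ℝ) else 0)
          linarith
    _ ≤ 4 := by linarith

lemma abs_apply_le_totalVariation_aux (s : MeasureTheory.SignedMeasure ℝ) {E : Set ℝ}
    (hE : MeasurableSet E) : |s E| ≤ (s.totalVariation Set.univ).toReal := by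
  have h := s.toSignedMeasure_toJordanDecomposition
  set j := s.toJordanDecomposition with hj
  have hsE : s E = (j.posPart E).toReal - (j.negPart E).toReal := by
    conv_lhs => rw [← h]
    rw [MeasureTheory.JordanDecomposition.toSignedMeasure]
    exact MeasureTheory.Measure.toSignedMeasure_sub_apply hE
  have htv : (s.totalVariation Set.univ).toReal
      = (j.posPart Set.univ).toReal + (j.negPart Set.univ).toReal := by
    rw [MeasureTheory.SignedMeasure.totalVariation, MeasureTheory.Measure.add_apply,
      ENNReal.toReal_add (measure_ne_top _ _) (measure_ne_top _ _)]
  have hp : (j.posPart E).toReal ≤ (j.posPart Set.univ).toReal :=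
    ENNReal.toReal_mono (measure_ne_top _ _) (measure_mono (Set.subset_univ _))
  have hn : (j.negPart E).toReal ≤ (j.negPart Set.univ).toReal :=
    ENNReal.toReal_mono (measure_ne_top _ _) (measure_mono (Set.subset_univ _))
  have hp0 : 0 ≤ (j.posPart E).toReal := ENNReal.toReal_nonneg
  have hn0 : 0 ≤ (j.negPart E).toReal := ENNReal.toReal_nonneg
  rw [hsE, htv, abs_sub_le_iff]
  constructor <;> nlinarith

lemma totalVariation_le_of_bound (s : MeasureTheory.SignedMeasure ℝ) (B : ℝ)
    (h : ∀ E : Set ℝ, MeasurableSet E → |s E| ≤ B) :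
    (s.totalVariation Set.univ).toReal ≤ 2 * B := by
  obtain ⟨i, hi₁, hi₂, hi₃, hp, hn⟩ := s.toJordanDecomposition_spec
  have hpos : (s.toJordanDecomposition.posPart Set.univ).toReal = s i := by
    rw [hp, MeasureTheory.SignedMeasure.toMeasureOfZeroLE_apply _ hi₂ hi₁ MeasurableSet.univ]
    simp [Set.inter_univ]
  have hneg : (s.toJordanDecomposition.negPart Set.univ).toReal = -s iᶜ := by
    rw [hn, MeasureTheory.SignedMeasure.toMeasureOfLEZero_apply _ hi₃ hi₁.compl
      MeasurableSet.univ]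
    simp [Set.inter_univ]
  have htv : (s.totalVariation Set.univ).toReal
      = (s.toJordanDecomposition.posPart Set.univ).toReal
        + (s.toJordanDecomposition.negPart Set.univ).toReal := by
    rw [MeasureTheory.SignedMeasure.totalVariation, MeasureTheory.Measure.add_apply,
      ENNReal.toReal_add (measure_ne_top _ _) (measure_ne_top _ _)]
  have h1 := abs_le.mp (h i hi₁)
  have h2 := abs_le.mp (h iᶜ hi₁.compl)
  rw [htv, hpos, hneg]
  linarith

/-- Let `a > 0` and, for each `t > 0`, let `μ t` be the signed Borel measure
`dμ(x) = [Θ_t(x+a) − Θ_t(x−a)]dx − dδ_{−a}(x) + dδ_a(x)`.  Then the total variation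
satisfies `V(μ t) ≥ (1/√π)∫_0^{a/√t} e^{−y²} dy`, and hence
`liminf_{t→0⁺} V(μ t) ≥ 1/2`; in particular `Θ_t(·+a) − Θ_t(·−a)` does not converge
to `δ_{−a} − δ_a` in variation as `t → 0⁺`. -/
theorem heat_dirac_difference_not_convergent_in_variation (a : ℝ) (ha : 0 < a)
    (μ : ℝ → MeasureTheory.SignedMeasure ℝ)
    (hμ : ∀ t > (0:ℝ), ∀ E : Set ℝ, MeasurableSet E →
      μ t E = (∫ x in E, (heatKernel t (x + a) - heatKernel t (x - a)))
        - (if -a ∈ E then 1 else 0) + (if a ∈ E then 1 else 0)) :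
    (∀ t > (0:ℝ),
      (1 / Real.sqrt Real.pi) *
          ∫ y in (0:ℝ)..(a / Real.sqrt t), Real.exp (-y ^ 2) ≤
        ((μ t).totalVariation Set.univ).toReal) ∧
    (1 / 2 : ℝ) ≤
      Filter.liminf (fun t : ℝ => ((μ t).totalVariation Set.univ).toReal)
        (nhdsWithin 0 (Set.Ioi 0)) ∧
    ¬ Tendsto (fun t : ℝ => ((μ t).totalVariation Set.univ).toReal)
        (nhdsWithin 0 (Set.Ioi 0)) (nhds 0) := by
  -- Key lower bound: V(μ t) ≥ 1 for all t > 0, via the set {a}.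
  have key : ∀ t > (0:ℝ), (1:ℝ) ≤ ((μ t).totalVariation Set.univ).toReal := by
    intro t ht
    have h1 : μ t {a} = 1 := by
      rw [hμ t ht {a} (measurableSet_singleton a)]
      have hna : -a ∉ ({a} : Set ℝ) := by
        simp only [Set.mem_singleton_iff]
        intro h; linarith
      have hzero : (∫ x in ({a} : Set ℝ),
          (heatKernel t (x + a) - heatKernel t (x - a))) = 0 := by
        have : (volume : Measure ℝ).restrict {a} = 0 :=
          Measure.restrict_eq_zero.mpr (measure_singleton a)
        rw [this, integral_zero_measure]
      simp [hzero, hna]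
    have h2 := abs_apply_le_totalVariation_aux (μ t) (measurableSet_singleton a)
    rw [h1] at h2
    simpa using h2
  -- Upper bound: V(μ t) ≤ 8 for all t > 0.
  have keyUB : ∀ t > (0:ℝ), ((μ t).totalVariation Set.univ).toReal ≤ 8 := by
    intro t ht
    have := totalVariation_le_of_bound (μ t) 4 (fun E hE => by
      rw [hμ t ht E hE]; exact apply_bound a t ht E hE)
    linarith
  -- The Gaussian integral bound: LHS of the first claim is at most 1.
  have hgauss : (∫ y : ℝ, Real.exp (-y ^ 2)) = Real.sqrt Real.pi := by
    have := integral_gaussian 1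
    simpa using this
  have hint : MeasureTheory.Integrable (fun y : ℝ => Real.exp (-y ^ 2)) := by
    have := integrable_exp_neg_mul_sq (one_pos : (0:ℝ) < 1)
    simpa using this
  have hπ : (0:ℝ) < Real.sqrt Real.pi := Real.sqrt_pos.mpr Real.pi_pos
  have hle1 : ∀ t > (0:ℝ),
      (1 / Real.sqrt Real.pi) * ∫ y in (0:ℝ)..(a / Real.sqrt t), Real.exp (-y ^ 2) ≤ 1 := by
    intro t ht
    have hb : (0:ℝ) ≤ a / Real.sqrt t := div_nonneg ha.le (Real.sqrt_nonneg t)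
    rw [intervalIntegral.integral_of_le hb]
    have h2 : (∫ y in Set.Ioc (0:ℝ) (a / Real.sqrt t), Real.exp (-y ^ 2))
        ≤ ∫ y : ℝ, Real.exp (-y ^ 2) :=
      MeasureTheory.setIntegral_le_integral hint
        (Filter.Eventually.of_forall fun x => (Real.exp_pos _).le)
    rw [hgauss] at h2
    calc (1 / Real.sqrt Real.pi) * ∫ y in Set.Ioc (0:ℝ) (a / Real.sqrt t), Real.exp (-y ^ 2)
        ≤ (1 / Real.sqrt Real.pi) * Real.sqrt Real.pi :=
          mul_le_mul_of_nonneg_left h2 (by positivity)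
      _ = 1 := one_div_mul_cancel hπ.ne'
  have part1 : ∀ t > (0:ℝ),
      (1 / Real.sqrt Real.pi) * ∫ y in (0:ℝ)..(a / Real.sqrt t), Real.exp (-y ^ 2) ≤
        ((μ t).totalVariation Set.univ).toReal := fun t ht =>
    le_trans (hle1 t ht) (key t ht)
  have hev : ∀ᶠ t in nhdsWithin (0:ℝ) (Set.Ioi 0),
      (1:ℝ) ≤ ((μ t).totalVariation Set.univ).toReal :=
    eventually_nhdsWithin_of_forall fun t ht => key t ht
  have hevUB : ∀ᶠ t in nhdsWithin (0:ℝ) (Set.Ioi 0),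
      ((μ t).totalVariation Set.univ).toReal ≤ 8 :=
    eventually_nhdsWithin_of_forall fun t ht => keyUB t ht
  refine ⟨part1, ?_, ?_⟩
  · have hcob : Filter.IsCoboundedUnder (· ≥ ·) (nhdsWithin (0:ℝ) (Set.Ioi 0))
        (fun t : ℝ => ((μ t).totalVariation Set.univ).toReal) :=
      Filter.IsCoboundedUnder.of_frequently_le (a := 8) hevUB.frequently
    have h12 : ∀ᶠ t in nhdsWithin (0:ℝ) (Set.Ioi 0),
        (fun _ : ℝ => (1/2:ℝ)) t ≤ ((μ t).totalVariation Set.univ).toReal :=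
      hev.mono fun t h => by norm_num; linarith
    have := Filter.le_liminf_of_le hcob h12
    exact this
  · intro hT
    have hlt : ∀ᶠ t in nhdsWithin (0:ℝ) (Set.Ioi 0),
        ((μ t).totalVariation Set.univ).toReal < 1 :=
      hT.eventually (eventually_lt_nhds one_pos)
    obtain ⟨t, h1, h2⟩ := (hev.and hlt).exists
    linarith
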